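/- Let μ be a probability measure on ℝ whose cumulative distribution function F (defined by F(x) = μ((-∞, x])) is continuous. Then the pushforward of μ under F is the uniform probability measure on the interval [0,1] (probability integral transform). -/

import Mathlib

open MeasureTheory Set ProbabilityTheory Filter Topology

/-- Probability integral transform: if the CDF `F` of a probability measure `μ` on `ℝ`
is continuous, then the pushforward of `μ` under `F` is the uniform measure on `[0,1]`. -/
theorem probability_integral_transform
    (μ : Measure ℝ) [IsProbabilityMeasure μ]
    (F : ℝ → ℝ) (hF : ∀ x, F x = (μ (Iic x)).toReal)
    (hcont : Continuous F) :
    μ.map F = volume.restrict (Icc (0 : ℝ) 1) := by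
  have hFc : ∀ x, F x = cdf μ x := fun x => by rw [hF, cdf_eq_real, measureReal_def]
  have hFeq : F = cdf μ := funext hFc
  have hm : Measurable F := hcont.measurable
  have hmono : Monotone F := hFeq ▸ monotone_cdf μ
  have h0 : ∀ x, 0 ≤ F x := fun x => (hFc x) ▸ cdf_nonneg μ x
  have h1 : ∀ x, F x ≤ 1 := fun x => (hFc x) ▸ cdf_le_one μ x
  have htop : Tendsto F atTop (𝓝 1) := hFeq ▸ tendsto_cdf_atTop μ
  have hbot : Tendsto F atBot (𝓝 0) := hFeq ▸ tendsto_cdf_atBot μ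
  have hmap : IsProbabilityMeasure (μ.map F) := Measure.isProbabilityMeasure_map hm.aemeasurable
  have hrest : IsProbabilityMeasure (volume.restrict (Icc (0 : ℝ) 1)) := by
    constructor
    rw [Measure.restrict_apply_univ, Real.volume_Icc]
    norm_num
  refine Measure.ext_of_Iic _ _ (fun t => ?_)
  rw [Measure.map_apply hm measurableSet_Iic, Measure.restrict_apply measurableSet_Iic]
  rcases lt_or_ge t 0 with ht | ht
  · have hA : F ⁻¹' Iic t = ∅ := by
      ext x; simp only [mem_preimage, mem_Iic, mem_empty_iff_false, iff_false, not_le]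
      exact ht.trans_le (h0 x)
    have hB : Iic t ∩ Icc (0:ℝ) 1 = ∅ := by
      ext x; simp only [mem_inter_iff, mem_Iic, mem_Icc, mem_empty_iff_false, iff_false]
      rintro ⟨h1', h2', _⟩; linarith
    rw [hA, hB, measure_empty, measure_empty]
  rcases le_or_gt 1 t with ht1 | ht1
  · have hA : F ⁻¹' Iic t = univ := by
      ext x; simp only [mem_preimage, mem_Iic, mem_univ, iff_true]
      exact (h1 x).trans ht1
    have hB : Iic t ∩ Icc (0:ℝ) 1 = Icc 0 1 := by
      ext x; simp only [mem_inter_iff, mem_Iic, mem_Icc, and_iff_right_iff_imp]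
      rintro ⟨_, h2'⟩; linarith
    rw [hA, hB, measure_univ, Real.volume_Icc]
    norm_num
  · -- 0 ≤ t < 1
    have hB : Iic t ∩ Icc (0:ℝ) 1 = Icc 0 t := by
      ext x; simp only [mem_inter_iff, mem_Iic, mem_Icc]
      constructor
      · rintro ⟨hx, hx0, _⟩; exact ⟨hx0, hx⟩
      · rintro ⟨hx0, hxt⟩; exact ⟨hxt, hx0, by linarith⟩
    rw [hB, Real.volume_Icc, sub_zero]
    set A := F ⁻¹' Iic t with hAdef
    rcases eq_empty_or_nonempty A with hA | hA
    · -- then t = 0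
      have ht0 : t ≤ 0 := by
        refine ge_of_tendsto hbot ?_
        filter_upwards with x
        by_contra hx
        exact (eq_empty_iff_forall_notMem.mp hA x) (le_of_not_ge hx)
      have ht00 : t = 0 := le_antisymm ht0 ht
      rw [hA, measure_empty, ht00, ENNReal.ofReal_zero]
    · -- A nonempty
      have hclosed : IsClosed A := isClosed_Iic.preimage hcont
      have hbdd : BddAbove A := by
        obtain ⟨b, hb⟩ := (htop.eventually (eventually_gt_nhds ht1)).exists
        refine ⟨b, fun x hx => ?_⟩
        by_contra hxb
        exact absurd hb (not_lt.mpr ((hmono (le_of_not_ge hxb)).trans hx))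
      set a := sSup A with ha
      have haA : a ∈ A := hclosed.csSup_mem hA hbdd
      have hFa_le : F a ≤ t := haA
      have hFa_ge : t ≤ F a := by
        refine ge_of_tendsto (hcont.continuousAt.mono_left nhdsWithin_le_nhds :
          Tendsto F (𝓝[>] a) (𝓝 (F a))) ?_
        filter_upwards [self_mem_nhdsWithin] with x (hx : a < x)
        by_contra hxt
        exact absurd (le_csSup hbdd (le_of_not_ge hxt : F x ≤ t)) (not_le.mpr hx)
      have hFa : F a = t := le_antisymm hFa_le hFa_ge
      have hAIic : A = Iic a := by
        ext x
        constructor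
        · exact fun hx => le_csSup hbdd hx
        · exact fun hx => (hmono hx).trans hFa_le
      rw [hAIic, ← ofReal_cdf μ a, ← hFc, hFa]
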